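/- Suppose ρ is stationary for W. Let V, M : K → ℝ, a, b ∈ ℝ, and let ν : ℝ → (K → ℝ) satisfy: ν_0 = ρ; for each h, ν_h is a probability distribution stationary for the perturbed rates W_h(x,y) = W(x,y) e^{h(b V(y) − a V(x))}; and for each x ∈ K the map h ↦ ν_h(x) is differentiable at 0. Then the function h ↦ ∑_x ν_h(x) (L M)(x) is differentiable at h = 0 with derivative χ^{ab}_{MV} = b ∑_x ρ(x) M(x) (L V)(x) + a ∑_x ρ(x) V(x) (L M)(x). (Proposition 2, stationary response formula.) -/

import Mathlib

/-- Proposition 2, stationary response formula: if `ρ` is stationary for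
`W` and `ν h` is a smooth-at-`0` family of stationary probability distributions for the
perturbed rates `W_h x y = W x y * exp (h (b V y - a V x))` with `ν 0 = ρ`, then
`h ↦ ∑ x, ν h x * (L M) x` is differentiable at `0` with derivative
`χ^{ab}_{MV} = b ⟨M LV⟩_ρ + a ⟨V LM⟩_ρ`. -/
theorem stationary_response_chi
    {K : Type*} [Fintype K] [Nonempty K]
    (W : K → K → ℝ) (hW : ∀ x y : K, x ≠ y → 0 ≤ W x y)
    (ρ : K → ℝ) (hρ0 : ∀ x, 0 ≤ ρ x) (hρ1 : ∑ x, ρ x = 1)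
    (hstat : ∀ f : K → ℝ, ∑ x, ρ x * (∑ y, W x y * (f y - f x)) = 0)
    (V M : K → ℝ) (a b : ℝ)
    (ν : ℝ → K → ℝ) (hν0 : ν 0 = ρ)
    (hνprob : ∀ h : ℝ, (∀ x, 0 ≤ ν h x) ∧ ∑ x, ν h x = 1)
    (hνstat : ∀ h : ℝ, ∀ f : K → ℝ,
      ∑ x, ν h x * (∑ y, (W x y * Real.exp (h * (b * V y - a * V x))) * (f y - f x)) = 0)
    (hνdiff : ∀ x, DifferentiableAt ℝ (fun h => ν h x) 0) :
    HasDerivAt (fun h => ∑ x, ν h x * (∑ y, W x y * (M y - M x)))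
      (b * ∑ x, ρ x * M x * (∑ y, W x y * (V y - V x))
        + a * ∑ x, ρ x * V x * (∑ y, W x y * (M y - M x))) 0 := by
  classical
  -- rewrite the function using stationarity of ν h
  have hF : (fun h => ∑ x, ν h x * (∑ y, W x y * (M y - M x)))
      = fun h => -∑ x, ∑ y,
          ν h x * (W x y * ((Real.exp (h * (b * V y - a * V x)) - 1) * (M y - M x))) := by
    funext h
    have h0 := hνstat h M
    have hsum : (∑ x, ν h x * (∑ y, W x y * (M y - M x)))
        + (∑ x, ∑ y,
            ν h x * (W x y * ((Real.exp (h * (b * V y - a * V x)) - 1) * (M y - M x))))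
        = ∑ x, ν h x * (∑ y, (W x y * Real.exp (h * (b * V y - a * V x))) * (M y - M x)) := by
      simp only [Finset.mul_sum, ← Finset.sum_add_distrib]
      refine Finset.sum_congr rfl fun x _ => Finset.sum_congr rfl fun y _ => ?_
      ring
    have : (∑ x, ν h x * (∑ y, W x y * (M y - M x)))
        + (∑ x, ∑ y,
            ν h x * (W x y * ((Real.exp (h * (b * V y - a * V x)) - 1) * (M y - M x)))) = 0 := by
      rw [hsum, h0]
    linarith [this]
  -- derivative of the rewritten function
  have hD : HasDerivAt
      (fun h => -∑ x, ∑ y,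
          ν h x * (W x y * ((Real.exp (h * (b * V y - a * V x)) - 1) * (M y - M x))))
      (-∑ x, ∑ y, ρ x * (W x y * ((b * V y - a * V x) * (M y - M x)))) 0 := by
    apply HasDerivAt.neg
    apply HasDerivAt.fun_sum
    intro x _
    apply HasDerivAt.fun_sum
    intro y _
    have h1 : HasDerivAt (fun h => ν h x) (deriv (fun h => ν h x) 0) 0 :=
      (hνdiff x).hasDerivAt
    have he : HasDerivAt (fun h : ℝ => Real.exp (h * (b * V y - a * V x)))
        (b * V y - a * V x) 0 := by
      have hlin : HasDerivAt (fun h : ℝ => h * (b * V y - a * V x)) (b * V y - a * V x) 0 :=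
        hasDerivAt_mul_const _
      have := hlin.exp
      simpa using this
    have h2 : HasDerivAt
        (fun h : ℝ => W x y * ((Real.exp (h * (b * V y - a * V x)) - 1) * (M y - M x)))
        (W x y * ((b * V y - a * V x) * (M y - M x))) 0 := by
      have := ((he.sub_const 1).mul_const (M y - M x)).const_mul (W x y)
      simpa using this
    have := h1.fun_mul h2
    convert this using 1
    · rfl
    simp [hν0, Real.exp_zero]
  rw [hF]
  -- identify the derivative with the stated expression, using stationarity of ρ
  have h3 : ∑ x, ρ x * (∑ y, W x y * (V y * M y - V x * M x)) = 0 :=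
    hstat (fun z => V z * M z)
  have hid : -∑ x, ∑ y, ρ x * (W x y * ((b * V y - a * V x) * (M y - M x)))
      = b * ∑ x, ρ x * M x * (∑ y, W x y * (V y - V x))
        + a * ∑ x, ρ x * V x * (∑ y, W x y * (M y - M x)) := by
    have hexp : (b * ∑ x, ρ x * M x * (∑ y, W x y * (V y - V x))
          + a * ∑ x, ρ x * V x * (∑ y, W x y * (M y - M x)))
          - b * ∑ x, ρ x * (∑ y, W x y * (V y * M y - V x * M x))
        = -∑ x, ∑ y, ρ x * (W x y * ((b * V y - a * V x) * (M y - M x))) := by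
      simp only [Finset.mul_sum, ← Finset.sum_neg_distrib, ← Finset.sum_sub_distrib,
        ← Finset.sum_add_distrib]
      refine Finset.sum_congr rfl fun x _ => Finset.sum_congr rfl fun y _ => ?_
      ring
    rw [← hexp, h3]
    ring
  rw [hid] at hD
  exact hD
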